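/- Let $a_1>a_2$, $b_1>b_2$, $t\in(0,1)$, $p_1,p_2\in(0,1)$ with $(a_1-a_2)(b_1-b_2)>(\sqrt{p_1}+\sqrt{p_2})^2$ (large separation with $T=1$). Define $\alpha_j=(1-t)a_j+tb_j-\sqrt{4p_jt(1-t)}$, $\beta_j=(1-t)a_j+tb_j+\sqrt{4p_jt(1-t)}$, and $x_0=\frac{\sqrt{p_1}}{\sqrt{p_1}+\sqrt{p_2}}\cdot\frac{\alpha_2+\beta_2}{2}+\frac{\sqrt{p_2}}{\sqrt{p_1}+\sqrt{p_2}}\cdot\frac{\alpha_1+\beta_1}{2}$. Then $(\alpha_1-x_0)(\beta_1-x_0) > \frac{p_1}{(\sqrt{p_1}+\sqrt{p_2})^2}\big((1-t)(a_1-a_2)-t(b_1-b_2)\big)^2$. -/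
import Mathlib


theorem stmt_3 (a₁ a₂ b₁ b₂ t p₁ p₂ : ℝ) (ha : a₁ > a₂) (hb : b₁ > b₂)
    (ht : t ∈ Set.Ioo (0:ℝ) 1) (hp₁ : p₁ ∈ Set.Ioo (0:ℝ) 1) (hp₂ : p₂ ∈ Set.Ioo (0:ℝ) 1)
    (hsep : (a₁ - a₂) * (b₁ - b₂) > (Real.sqrt p₁ + Real.sqrt p₂) ^ 2)
    (α₁ β₁ α₂ β₂ x₀ : ℝ)
    (hα₁ : α₁ = (1 - t) * a₁ + t * b₁ - Real.sqrt (4 * p₁ * t * (1 - t)))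
    (hβ₁ : β₁ = (1 - t) * a₁ + t * b₁ + Real.sqrt (4 * p₁ * t * (1 - t)))
    (hα₂ : α₂ = (1 - t) * a₂ + t * b₂ - Real.sqrt (4 * p₂ * t * (1 - t)))
    (hβ₂ : β₂ = (1 - t) * a₂ + t * b₂ + Real.sqrt (4 * p₂ * t * (1 - t)))
    (hx₀ : x₀ = Real.sqrt p₁ / (Real.sqrt p₁ + Real.sqrt p₂) * ((α₂ + β₂) / 2)
        + Real.sqrt p₂ / (Real.sqrt p₁ + Real.sqrt p₂) * ((α₁ + β₁) / 2)) :
    (α₁ - x₀) * (β₁ - x₀) >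
      p₁ / (Real.sqrt p₁ + Real.sqrt p₂) ^ 2 *
        ((1 - t) * (a₁ - a₂) - t * (b₁ - b₂)) ^ 2 := by
  obtain ⟨ht0, ht1⟩ := ht
  have hp₁0 : 0 < p₁ := hp₁.1
  have h1t : 0 < 1 - t := by linarith
  have hsp1 : 0 < Real.sqrt p₁ := Real.sqrt_pos.mpr hp₁.1
  have hsp2 : 0 < Real.sqrt p₂ := Real.sqrt_pos.mpr hp₂.1
  set s₁ := Real.sqrt p₁ with hs₁
  set s₂ := Real.sqrt p₂ with hs₂
  set S := s₁ + s₂ with hSdef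
  have hS : 0 < S := by positivity
  have hp1sq : s₁ ^ 2 = p₁ := Real.sq_sqrt hp₁.1.le
  set u := Real.sqrt (4 * p₁ * t * (1 - t)) with hu
  have hu2 : u ^ 2 = 4 * p₁ * t * (1 - t) := Real.sq_sqrt (by nlinarith [mul_pos (mul_pos hp₁.1 ht0) h1t])
  set d := (1 - t) * (a₁ - a₂) + t * (b₁ - b₂) with hd
  clear_value s₁ s₂ S u d
  have hA : α₁ - x₀ = s₁ * d / S - u := by
    rw [hα₁, hx₀, hα₂, hβ₂, hβ₁, hα₁, hd, hSdef]
    field_simp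
    ring
  have hB : β₁ - x₀ = s₁ * d / S + u := by
    rw [hβ₁, hx₀, hα₂, hβ₂, hβ₁, hα₁, hd, hSdef]
    field_simp
    ring
  rw [hA, hB]
  have hexp : (s₁ * d / S - u) * (s₁ * d / S + u)
      = (s₁ ^ 2 * d ^ 2 - u ^ 2 * S ^ 2) / S ^ 2 := by
    field_simp
    ring
  rw [hexp, gt_iff_lt, div_mul_eq_mul_div, div_lt_div_iff_of_pos_right (by positivity)]
  have hid : s₁ ^ 2 * d ^ 2 - u ^ 2 * S ^ 2
      - p₁ * ((1 - t) * (a₁ - a₂) - t * (b₁ - b₂)) ^ 2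
      = 4 * p₁ * (t * (1 - t)) * ((a₁ - a₂) * (b₁ - b₂) - S ^ 2) := by
    rw [hd, hu2, ← hp1sq]; ring
  have key : 0 < 4 * p₁ * (t * (1 - t)) * ((a₁ - a₂) * (b₁ - b₂) - S ^ 2) := by
    apply mul_pos (by positivity) (by linarith)
  linarith [hid, key]
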